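/- (Weighted Expander Mixing Lemma) Let (X,w) be a weighted graph whose adjacency operator 𝒜 has all eigenvalues on the orthogonal complement of the constant function contained in [μ, λ]. For vertex subsets A, B with α = w(A), β = w(B): (i) |(1/2)w(E_ord(A,B)) − αβ| ≤ max{|λ|,|μ|}·√(αβ(1−α)(1−β)); and (ii) μ·α(1−α) ≤ w(E(A)) − α² ≤ λ·α(1−α), where E(A) is the set of edges with both endpoints in A. -/

import Mathlib

open SimpleGraph Finset

/-- The weighted adjacency operator of a weighted graph. -/
noncomputable def adjOp {V : Type*} [Fintype V] (G : SimpleGraph V) [DecidableRel G.Adj]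
    (wE : Sym2 V → ℝ) (wV : V → ℝ) (f : V → ℝ) : V → ℝ :=
  fun x => ∑ y ∈ G.neighborFinset x, wE s(x, y) / (2 * wV x) * f y

/-- The doubly-weighted bilinear form `∑ x ∑ {y ~ x} w(xy) f(x) g(y)`. -/
noncomputable def Tb {V : Type*} [Fintype V] (G : SimpleGraph V) [DecidableRel G.Adj]
    (wE : Sym2 V → ℝ) (f g : V → ℝ) : ℝ :=
  ∑ x, ∑ y ∈ G.neighborFinset x, wE s(x, y) * f x * g y

/-- real-valued indicator of a finset -/
noncomputable def ind {V : Type*} [DecidableEq V] (S : Finset V) : V → ℝ :=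
  fun x => if x ∈ S then 1 else 0

set_option linter.unusedSectionVars false

section Aux
variable {V : Type*} [Fintype V] [DecidableEq V] (G : SimpleGraph V) [DecidableRel G.Adj]
  (wE : Sym2 V → ℝ) (wV : V → ℝ)

lemma double_count (F : Sym2 V → ℝ) :
    ∑ x, ∑ y ∈ G.neighborFinset x, F s(x, y) = 2 * ∑ e ∈ G.edgeFinset, F e := by
  have h1 : ∑ d : G.Dart, F d.edge = ∑ x, ∑ y ∈ G.neighborFinset x, F s(x, y) := by
    rw [← Finset.sum_fiberwise (univ : Finset G.Dart) (fun d : G.Dart => d.fst)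
      (fun d => F d.edge)]
    refine Finset.sum_congr rfl fun v _ => ?_
    rw [show (univ.filter fun d : G.Dart => d.fst = v) = univ.image (G.dartOfNeighborSet v)
      from G.dart_fst_fiber v]
    rw [Finset.sum_image (fun a _ b _ h => G.dartOfNeighborSet_injective v h)]
    rw [SimpleGraph.neighborFinset_def, ← Finset.sum_set_coe]
    rfl
  have h2 : ∑ d : G.Dart, F d.edge = 2 * ∑ e ∈ G.edgeFinset, F e := by
    rw [← Finset.sum_fiberwise_of_maps_to
      (fun d _ => by rw [mem_edgeFinset]; exact d.edge_mem : ∀ d ∈ (univ : Finset G.Dart),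
        d.edge ∈ G.edgeFinset) (fun d => F d.edge)]
    rw [Finset.mul_sum]
    refine Finset.sum_congr rfl fun e he => ?_
    rw [Finset.sum_congr rfl (fun d hd => by rw [(Finset.mem_filter.mp hd).2] :
      ∀ d ∈ univ.filter fun d : G.Dart => d.edge = e, F d.edge = F e)]
    rw [Finset.sum_const, G.dart_edge_fiber_card e (mem_edgeFinset.mp he), nsmul_eq_mul]
    norm_num
  rw [← h1, h2]

lemma Tb_symm (f g : V → ℝ) : Tb G wE f g = Tb G wE g f := by
  simp only [Tb, neighborFinset_eq_filter, Finset.sum_filter]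
  rw [Finset.sum_comm]
  refine Finset.sum_congr rfl fun x _ => Finset.sum_congr rfl fun y _ => ?_
  by_cases h : G.Adj x y
  · rw [if_pos ((G.adj_comm x y).mp h), if_pos h, Sym2.eq_swap]; ring
  · rw [if_neg (fun hh => h ((G.adj_comm y x).mp hh)), if_neg h]

lemma Tb_expand (f g : V → ℝ) (a b : ℝ) :
    Tb G wE (fun x => f x - a) (fun x => g x - b)
      = Tb G wE f g - b * Tb G wE f (fun _ => 1) - a * Tb G wE (fun _ => 1) g
        + a * b * Tb G wE (fun _ => 1) (fun _ => 1) := by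
  simp only [Tb, Finset.mul_sum, ← Finset.sum_sub_distrib, ← Finset.sum_add_distrib]
  exact Finset.sum_congr rfl fun x _ => Finset.sum_congr rfl fun y _ => by ring

lemma Tb_expand2 (f g : V → ℝ) (s t : ℝ) :
    Tb G wE (fun x => s * f x + t * g x) (fun x => s * f x + t * g x)
      = s * s * Tb G wE f f + s * t * Tb G wE f g + t * s * Tb G wE g f
        + t * t * Tb G wE g g := by
  simp only [Tb, Finset.mul_sum, ← Finset.sum_add_distrib]
  exact Finset.sum_congr rfl fun x _ => Finset.sum_congr rfl fun y _ => by ring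

lemma Tb_one (hvert : ∀ v : V, 2 * wV v = ∑ u ∈ G.neighborFinset v, wE s(v, u))
    (f : V → ℝ) : Tb G wE f (fun _ => 1) = ∑ x, 2 * wV x * f x := by
  refine Finset.sum_congr rfl fun x _ => ?_
  rw [hvert x, Finset.sum_mul]
  exact Finset.sum_congr rfl fun y _ => by ring

lemma Tb_ind (S T : Finset V) :
    Tb G wE (ind S) (ind T) = ∑ u ∈ S, ∑ v ∈ T.filter (G.Adj u), wE s(u, v) := by
  have h1 : ∀ u : V, ∑ v ∈ T.filter (G.Adj u), wE s(u, v)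
      = ∑ y ∈ G.neighborFinset u, wE s(u, y) * ind T y := by
    intro u
    have hset : T.filter (G.Adj u) = G.neighborFinset u ∩ T := by
      ext y; simp [mem_neighborFinset, and_comm]
    rw [hset, ← Finset.sum_ite_mem]
    refine Finset.sum_congr rfl fun y _ => ?_
    by_cases h : y ∈ T <;> simp [ind, h]
  calc Tb G wE (ind S) (ind T)
      = ∑ x, if x ∈ S then ∑ y ∈ G.neighborFinset x, wE s(x, y) * ind T y else 0 := by
        refine Finset.sum_congr rfl fun x _ => ?_
        by_cases h : x ∈ S
        · rw [if_pos h]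
          exact Finset.sum_congr rfl fun y _ => by simp [ind, h]
        · rw [if_neg h]
          exact Finset.sum_eq_zero fun y _ => by simp [ind, h]
    _ = ∑ u ∈ S, ∑ y ∈ G.neighborFinset u, wE s(u, y) * ind T y := by
        rw [Finset.sum_ite_mem, Finset.univ_inter]
    _ = ∑ u ∈ S, ∑ v ∈ T.filter (G.Adj u), wE s(u, v) :=
        Finset.sum_congr rfl fun u _ => (h1 u).symm

lemma sum_ind (S : Finset V) : ∑ x, wV x * ind S x = ∑ v ∈ S, wV v := by
  simp only [ind, mul_ite, mul_one, mul_zero]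
  rw [Finset.sum_ite_mem, Finset.univ_inter]

lemma sum_ind2 (S : Finset V) : ∑ x, wV x * ind S x * ind S x = ∑ v ∈ S, wV v := by
  rw [← sum_ind wV S]
  refine Finset.sum_congr rfl fun x _ => ?_
  by_cases h : x ∈ S <;> simp [ind, h]

end Aux

set_option maxHeartbeats 1000000
theorem stmt9 {V : Type*} [Fintype V] [DecidableEq V] (G : SimpleGraph V)
    [DecidableRel G.Adj]
    (wE : Sym2 V → ℝ) (wV : V → ℝ)
    (hEpos : ∀ e ∈ G.edgeSet, 0 < wE e) (hVpos : ∀ v : V, 0 < wV v)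
    (hsum : ∑ e ∈ G.edgeFinset, wE e = 1)
    (hvert : ∀ v : V, 2 * wV v = ∑ u ∈ G.neighborFinset v, wE s(v, u))
    (μ lam : ℝ)
    (hspec : ∀ f : V → ℝ, (∑ x, wV x * f x = 0) →
      μ * (∑ x, wV x * f x * f x) ≤ ∑ x, wV x * adjOp G wE wV f x * f x ∧
      ∑ x, wV x * adjOp G wE wV f x * f x ≤ lam * (∑ x, wV x * f x * f x))
    (A B : Finset V) :
    |(1 / 2) * (∑ u ∈ A, ∑ v ∈ B.filter (G.Adj u), wE s(u, v)) -
        (∑ v ∈ A, wV v) * (∑ v ∈ B, wV v)|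
      ≤ max |lam| |μ| *
        Real.sqrt ((∑ v ∈ A, wV v) * (∑ v ∈ B, wV v) *
          (1 - ∑ v ∈ A, wV v) * (1 - ∑ v ∈ B, wV v)) ∧
    μ * (∑ v ∈ A, wV v) * (1 - ∑ v ∈ A, wV v)
      ≤ (1 / 2) * (∑ u ∈ A, ∑ v ∈ A.filter (G.Adj u), wE s(u, v)) -
        (∑ v ∈ A, wV v) ^ 2 ∧
    (1 / 2) * (∑ u ∈ A, ∑ v ∈ A.filter (G.Adj u), wE s(u, v)) -
        (∑ v ∈ A, wV v) ^ 2
      ≤ lam * (∑ v ∈ A, wV v) * (1 - ∑ v ∈ A, wV v) := by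
  classical
  -- total weight is 1
  have hW : ∑ x, wV x = 1 := by
    have h2 := double_count G wE
    have h3 : ∑ x, 2 * wV x = ∑ x, ∑ y ∈ G.neighborFinset x, wE s(x, y) :=
      Finset.sum_congr rfl fun x _ => hvert x
    rw [h2, hsum, ← Finset.mul_sum] at h3
    linarith
  -- quadratic form in terms of Tb
  have hQT : ∀ f : V → ℝ,
      ∑ x, wV x * adjOp G wE wV f x * f x = (1 / 2) * Tb G wE f f := by
    intro f
    rw [Tb, Finset.mul_sum]
    refine Finset.sum_congr rfl fun x _ => ?_
    simp only [adjOp]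
    rw [Finset.mul_sum, Finset.sum_mul, Finset.mul_sum]
    refine Finset.sum_congr rfl fun y _ => ?_
    have hx : wV x ≠ 0 := (hVpos x).ne'
    field_simp
  -- deviation functions
  set fA : V → ℝ := fun x => ind A x - (∑ v ∈ A, wV v) with hfA
  set fB : V → ℝ := fun x => ind B x - (∑ v ∈ B, wV v) with hfB
  have horth : ∀ S : Finset V, ∑ x, wV x * (ind S x - (∑ v ∈ S, wV v)) = 0 := by
    intro S
    have h1 : ∀ x, wV x * (ind S x - (∑ v ∈ S, wV v))
        = wV x * ind S x - wV x * (∑ v ∈ S, wV v) := fun x => by ring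
    rw [Finset.sum_congr rfl fun x _ => h1 x, Finset.sum_sub_distrib, sum_ind wV S,
      ← Finset.sum_mul, hW, one_mul, sub_self]
  have hnorm : ∀ S : Finset V, ∑ x, wV x * (ind S x - (∑ v ∈ S, wV v)) *
      (ind S x - (∑ v ∈ S, wV v)) = (∑ v ∈ S, wV v) * (1 - (∑ v ∈ S, wV v)) := by
    intro S
    have h1 : ∀ x, wV x * (ind S x - (∑ v ∈ S, wV v)) * (ind S x - (∑ v ∈ S, wV v))
        = wV x * ind S x * ind S x - 2 * (∑ v ∈ S, wV v) * (wV x * ind S x)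
          + (∑ v ∈ S, wV v) * (∑ v ∈ S, wV v) * wV x := fun x => by ring
    rw [Finset.sum_congr rfl fun x _ => h1 x, Finset.sum_add_distrib,
      Finset.sum_sub_distrib, sum_ind2 wV S, ← Finset.mul_sum, sum_ind wV S,
      ← Finset.mul_sum, hW]
    ring
  have horthA : ∑ x, wV x * fA x = 0 := horth A
  have horthB : ∑ x, wV x * fB x = 0 := horth B
  have hNormA : ∑ x, wV x * fA x * fA x = (∑ v ∈ A, wV v) * (1 - (∑ v ∈ A, wV v)) :=
    hnorm A
  have hNormB : ∑ x, wV x * fB x * fB x = (∑ v ∈ B, wV v) * (1 - (∑ v ∈ B, wV v)) :=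
    hnorm B
  -- sum nonnegativity
  have hnn : ∀ h : V → ℝ, 0 ≤ ∑ x, wV x * h x * h x := fun h =>
    Finset.sum_nonneg fun x _ => by
      rw [mul_assoc]; exact mul_nonneg (hVpos x).le (mul_self_nonneg _)
  -- expansion identity
  have hTone : ∀ S : Finset V, Tb G wE (ind S) (fun _ => 1) = 2 * (∑ v ∈ S, wV v) := by
    intro S
    rw [Tb_one G wE wV hvert,
      show ∑ x, 2 * wV x * ind S x = 2 * ∑ x, wV x * ind S x by
        rw [Finset.mul_sum]; exact Finset.sum_congr rfl fun x _ => by ring,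
      sum_ind wV S]
  have hT11 : Tb G wE (fun _ : V => 1) (fun _ => 1) = 2 := by
    rw [Tb_one G wE wV hvert]
    simp only [mul_one]
    rw [← Finset.mul_sum, hW, mul_one]
  have hexp : ∀ S T : Finset V,
      Tb G wE (fun x => ind S x - (∑ v ∈ S, wV v)) (fun x => ind T x - (∑ v ∈ T, wV v))
        = Tb G wE (ind S) (ind T) - 2 * (∑ v ∈ S, wV v) * (∑ v ∈ T, wV v) := by
    intro S T
    rw [Tb_expand, hTone S, hT11, Tb_symm G wE (fun _ => 1) (ind T), hTone T]
    ring
  have hexpAB : Tb G wE fA fB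
      = (∑ u ∈ A, ∑ v ∈ B.filter (G.Adj u), wE s(u, v))
        - 2 * (∑ v ∈ A, wV v) * (∑ v ∈ B, wV v) := by
    rw [hfA, hfB, hexp A B, Tb_ind]
  have hexpAA : Tb G wE fA fA
      = (∑ u ∈ A, ∑ v ∈ A.filter (G.Adj u), wE s(u, v))
        - 2 * (∑ v ∈ A, wV v) * (∑ v ∈ A, wV v) := by
    rw [hfA, hexp A A, Tb_ind]
  -- spectral bound constants
  have hMl : lam ≤ max |lam| |μ| := (le_abs_self lam).trans (le_max_left _ _)
  have hMm : -(max |lam| |μ|) ≤ μ := by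
    have := (neg_le_abs μ)
    have h2 : |μ| ≤ max |lam| |μ| := le_max_right _ _
    linarith
  have hM0 : 0 ≤ max |lam| |μ| := (abs_nonneg lam).trans (le_max_left _ _)
  refine ⟨?_, ?_, ?_⟩
  · -- part (i)
    have hI : (1 / 2) * (∑ u ∈ A, ∑ v ∈ B.filter (G.Adj u), wE s(u, v)) -
        (∑ v ∈ A, wV v) * (∑ v ∈ B, wV v) = (1 / 2) * Tb G wE fA fB := by
      rw [hexpAB]; ring
    rw [hI]
    rcases (hnn fA).eq_or_lt with h0 | hNf
    · -- fA ≡ 0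
      have hz : ∀ x, fA x = 0 := by
        intro x
        have hterm := (Finset.sum_eq_zero_iff_of_nonneg (fun x _ => by
          rw [mul_assoc]; exact mul_nonneg (hVpos x).le (mul_self_nonneg _))).mp h0.symm
          x (Finset.mem_univ x)
        rcases mul_eq_zero.mp hterm with h | h
        · rcases mul_eq_zero.mp h with h' | h'
          · exact absurd h' (hVpos x).ne'
          · exact h'
        · exact h
      have hTz : Tb G wE fA fB = 0 := by
        simp only [Tb]
        exact Finset.sum_eq_zero fun x _ => Finset.sum_eq_zero fun y _ => by
          rw [hz x]; ring
      rw [hTz]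
      simp only [mul_zero, abs_zero]
      exact mul_nonneg hM0 (Real.sqrt_nonneg _)
    rcases (hnn fB).eq_or_lt with h0 | hNg
    · have hz : ∀ x, fB x = 0 := by
        intro x
        have hterm := (Finset.sum_eq_zero_iff_of_nonneg (fun x _ => by
          rw [mul_assoc]; exact mul_nonneg (hVpos x).le (mul_self_nonneg _))).mp h0.symm
          x (Finset.mem_univ x)
        rcases mul_eq_zero.mp hterm with h | h
        · rcases mul_eq_zero.mp h with h' | h'
          · exact absurd h' (hVpos x).ne'
          · exact h'
        · exact h
      have hTz : Tb G wE fA fB = 0 := by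
        simp only [Tb]
        exact Finset.sum_eq_zero fun x _ => Finset.sum_eq_zero fun y _ => by
          rw [hz y]; ring
      rw [hTz]
      simp only [mul_zero, abs_zero]
      exact mul_nonneg hM0 (Real.sqrt_nonneg _)
    · -- both positive
      set p : ℝ := Real.sqrt (∑ x, wV x * fA x * fA x) with hp
      set q : ℝ := Real.sqrt (∑ x, wV x * fB x * fB x) with hq
      have hppos : 0 < p := Real.sqrt_pos.mpr hNf
      have hqpos : 0 < q := Real.sqrt_pos.mpr hNg
      have hp2 : p ^ 2 = ∑ x, wV x * fA x * fA x := Real.sq_sqrt (hnn fA)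
      have hq2 : q ^ 2 = ∑ x, wV x * fB x * fB x := Real.sq_sqrt (hnn fB)
      set s : ℝ := Real.sqrt (q / p) with hsdef
      have hspos : 0 < s := Real.sqrt_pos.mpr (div_pos hqpos hppos)
      have hs2 : s ^ 2 = q / p := Real.sq_sqrt (div_pos hqpos hppos).le
      have hs2' : s⁻¹ ^ 2 = p / q := by
        rw [inv_pow, hs2, inv_div]
      set u : V → ℝ := fun x => s * fA x + s⁻¹ * fB x with hu
      set v : V → ℝ := fun x => s * fA x + (-s⁻¹) * fB x with hv
      have hsne : s ≠ 0 := hspos.ne'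
      have horthu : ∑ x, wV x * u x = 0 := by
        have h1 : ∀ x, wV x * u x = s * (wV x * fA x) + s⁻¹ * (wV x * fB x) := fun x => by
          rw [hu]; ring
        rw [Finset.sum_congr rfl fun x _ => h1 x, Finset.sum_add_distrib,
          ← Finset.mul_sum, ← Finset.mul_sum, horthA, horthB]
        ring
      have horthv : ∑ x, wV x * v x = 0 := by
        have h1 : ∀ x, wV x * v x = s * (wV x * fA x) + (-s⁻¹) * (wV x * fB x) := fun x => by
          rw [hv]; ring
        rw [Finset.sum_congr rfl fun x _ => h1 x, Finset.sum_add_distrib,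
          ← Finset.mul_sum, ← Finset.mul_sum, horthA, horthB]
        ring
      have hNu : ∑ x, wV x * u x * u x
          = s ^ 2 * (∑ x, wV x * fA x * fA x) + s⁻¹ ^ 2 * (∑ x, wV x * fB x * fB x)
            + 2 * (∑ x, wV x * fA x * fB x) := by
        have h1 : ∀ x, wV x * u x * u x
            = s ^ 2 * (wV x * fA x * fA x) + s⁻¹ ^ 2 * (wV x * fB x * fB x)
              + 2 * (wV x * fA x * fB x) := by
          intro x
          rw [hu]
          field_simp
          ring
        rw [Finset.sum_congr rfl fun x _ => h1 x, Finset.sum_add_distrib,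
          Finset.sum_add_distrib, ← Finset.mul_sum, ← Finset.mul_sum, ← Finset.mul_sum]
      have hNv : ∑ x, wV x * v x * v x
          = s ^ 2 * (∑ x, wV x * fA x * fA x) + s⁻¹ ^ 2 * (∑ x, wV x * fB x * fB x)
            - 2 * (∑ x, wV x * fA x * fB x) := by
        have h1 : ∀ x, wV x * v x * v x
            = s ^ 2 * (wV x * fA x * fA x) + s⁻¹ ^ 2 * (wV x * fB x * fB x)
              - 2 * (wV x * fA x * fB x) := by
          intro x
          rw [hv]
          field_simp
          ring
        rw [Finset.sum_congr rfl fun x _ => h1 x, Finset.sum_sub_distrib,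
          Finset.sum_add_distrib, ← Finset.mul_sum, ← Finset.mul_sum, ← Finset.mul_sum]
      -- Nu + Nv = 4pq
      have hval : s ^ 2 * (∑ x, wV x * fA x * fA x) + s⁻¹ ^ 2 * (∑ x, wV x * fB x * fB x)
          = 2 * (p * q) := by
        rw [hs2, hs2', ← hp2, ← hq2]
        field_simp
        ring
      have hNuv : (∑ x, wV x * u x * u x) + (∑ x, wV x * v x * v x) = 4 * (p * q) := by
        rw [hNu, hNv]; linarith [hval]
      -- Tb difference
      have hTuv : Tb G wE u u - Tb G wE v v = 4 * Tb G wE fA fB := by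
        have e1 := Tb_expand2 G wE fA fB s s⁻¹
        have e2 := Tb_expand2 G wE fA fB s (-s⁻¹)
        rw [← hu] at e1
        rw [← hv] at e2
        have hsym := Tb_symm G wE fA fB
        have hss : s * s⁻¹ = 1 := mul_inv_cancel₀ hsne
        have h3 : Tb G wE u u - Tb G wE v v
            = 2 * (s * s⁻¹) * Tb G wE fA fB + 2 * (s * s⁻¹) * Tb G wE fB fA := by
          rw [e1, e2]; ring
        rw [hss, ← hsym] at h3
        linarith
      -- spectral bounds
      obtain ⟨hul, hur⟩ := hspec u horthu
      obtain ⟨hvl, hvr⟩ := hspec v horthv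
      rw [hQT u] at hul hur
      rw [hQT v] at hvl hvr
      have hNu0 : 0 ≤ ∑ x, wV x * u x * u x := hnn u
      have hNv0 : 0 ≤ ∑ x, wV x * v x * v x := hnn v
      have hb1 : lam * (∑ x, wV x * u x * u x)
          ≤ max |lam| |μ| * (∑ x, wV x * u x * u x) :=
        mul_le_mul_of_nonneg_right hMl hNu0
      have hb2 : -(max |lam| |μ|) * (∑ x, wV x * v x * v x)
          ≤ μ * (∑ x, wV x * v x * v x) :=
        mul_le_mul_of_nonneg_right hMm hNv0
      have hb3 : lam * (∑ x, wV x * v x * v x)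
          ≤ max |lam| |μ| * (∑ x, wV x * v x * v x) :=
        mul_le_mul_of_nonneg_right hMl hNv0
      have hb4 : -(max |lam| |μ|) * (∑ x, wV x * u x * u x)
          ≤ μ * (∑ x, wV x * u x * u x) :=
        mul_le_mul_of_nonneg_right hMm hNu0
      have hMsum : max |lam| |μ| * (∑ x, wV x * u x * u x)
          + max |lam| |μ| * (∑ x, wV x * v x * v x)
          = 4 * (max |lam| |μ| * (p * q)) := by
        linear_combination max |lam| |μ| * hNuv
      -- sqrt identity
      have hsqrt : Real.sqrt ((∑ v ∈ A, wV v) * (∑ v ∈ B, wV v) *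
          (1 - ∑ v ∈ A, wV v) * (1 - ∑ v ∈ B, wV v)) = p * q := by
        rw [show (∑ v ∈ A, wV v) * (∑ v ∈ B, wV v) *
            (1 - ∑ v ∈ A, wV v) * (1 - ∑ v ∈ B, wV v)
            = (∑ x, wV x * fA x * fA x) * (∑ x, wV x * fB x * fB x) by
          rw [hNormA, hNormB]; ring]
        rw [Real.sqrt_mul (hnn fA), hp, hq]
      rw [hsqrt]
      rw [abs_le]
      constructor
      · linarith [hul, hvr, hTuv, hb3, hb4, hMsum]
      · linarith [hur, hvl, hTuv, hb1, hb2, hMsum]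
  · -- part (ii) lower
    obtain ⟨hl, _⟩ := hspec fA horthA
    rw [hQT fA, hNormA] at hl
    have h2 : (1 / 2) * Tb G wE fA fA
        = (1 / 2) * (∑ u ∈ A, ∑ v ∈ A.filter (G.Adj u), wE s(u, v))
          - (∑ v ∈ A, wV v) ^ 2 := by
      rw [hexpAA]; ring
    nlinarith [hl, h2]
  · obtain ⟨_, hr⟩ := hspec fA horthA
    rw [hQT fA, hNormA] at hr
    have h2 : (1 / 2) * Tb G wE fA fA
        = (1 / 2) * (∑ u ∈ A, ∑ v ∈ A.filter (G.Adj u), wE s(u, v))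
          - (∑ v ∈ A, wV v) ^ 2 := by
      rw [hexpAA]; ring
    nlinarith [hr, h2]
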